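/- Let ξ ∈ ℂ with Re ξ > 0 and Im ξ > 0, let Φ(x) = e^{iξ‖x‖}/(4π‖x‖), and let G be the matrix-valued function with components G_{jℓ}(x) = −Φ(x)δ_{jℓ} + (1/ξ²)∂ⱼ∂ₗΦ(x). Then for every x ∈ ℝ³ with x ≠ 0 and all 1 ≤ j, ℓ ≤ 3, |G_{jℓ}(x)| ≤ (1/(4π)) · ( 2/‖x‖ + 4/(|ξ|·‖x‖²) + 4/(|ξ|²·‖x‖³) ). -/

import Mathlib

open Complex Real

/-- The outgoing fundamental solution of the Helmholtz equation in `ℝ³` with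
complex wavenumber `ξ`: `Φ(x) = e^{iξ‖x‖}/(4π‖x‖)`. -/
noncomputable def Phi (ξ : ℂ) (x : EuclideanSpace ℝ (Fin 3)) : ℂ :=
  Complex.exp (Complex.I * ξ * (‖x‖ : ℂ)) / (4 * (Real.pi : ℂ) * (‖x‖ : ℂ))

/-- Partial derivative `∂ₘ f` of a function `f : ℝ³ → ℂ`. -/
noncomputable def pd (m : Fin 3) (f : EuclideanSpace ℝ (Fin 3) → ℂ)
    (x : EuclideanSpace ℝ (Fin 3)) : ℂ :=
  fderiv ℝ f x (EuclideanSpace.single m 1)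

/-- Component `(j,ℓ)` of the fundamental solution of the time-harmonic Maxwell
equations: `G_{jℓ}(x) = −Φ(x)δ_{jℓ} + (1/ξ²)∂ⱼ∂ₗΦ(x)`. -/
noncomputable def G (ξ : ℂ) (j l : Fin 3) (x : EuclideanSpace ℝ (Fin 3)) : ℂ :=
  -Phi ξ x * (if j = l then 1 else 0) + (1 / ξ ^ 2) * pd j (pd l (Phi ξ)) x


set_option maxHeartbeats 1000000

noncomputable abbrev E3 := EuclideanSpace ℝ (Fin 3)

lemma hasFDerivAt_norm' {y : E3} (hy : y ≠ 0) :
    HasFDerivAt (fun z : E3 => ‖z‖) ((‖y‖⁻¹ : ℝ) • innerSL ℝ y) y := by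
  have h0 : ‖y‖ ≠ 0 := norm_ne_zero_iff.mpr hy
  have h2 : HasFDerivAt (fun z : E3 => ‖z‖ ^ 2) (2 • innerSL ℝ y) y :=
    (hasStrictFDerivAt_norm_sq y).hasFDerivAt
  have hs : HasDerivAt Real.sqrt (1 / (2 * Real.sqrt (‖y‖ ^ 2))) (‖y‖ ^ 2) :=
    Real.hasDerivAt_sqrt (by positivity)
  have h := hs.comp_hasFDerivAt y h2
  have he : Real.sqrt ∘ (fun z : E3 => ‖z‖ ^ 2) = fun z : E3 => ‖z‖ := by
    funext z; simp [Function.comp, Real.sqrt_sq (norm_nonneg z)]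
  rw [he] at h
  refine h.congr_fderiv (Eq.symm ?_)
  rw [Real.sqrt_sq (norm_nonneg y)]
  ext v
  simp only [ContinuousLinearMap.coe_smul', Pi.smul_apply, smul_eq_mul,
    ContinuousLinearMap.smul_apply, nsmul_eq_mul]
  field_simp
  ring

lemma comp_norm_hasFDerivAt {h : ℝ → ℂ} {c : ℂ} {y : E3} (hy : y ≠ 0)
    (hh : HasDerivAt h c ‖y‖) :
    HasFDerivAt (fun z : E3 => h ‖z‖)
      ((c * (‖y‖⁻¹ : ℝ)) • (Complex.ofRealCLM.comp (innerSL ℝ y))) y := by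
  have h1 := hasFDerivAt_norm' hy
  have h2 := (hh.hasFDerivAt).comp (x := y) h1
  refine h2.congr_fderiv (Eq.symm ?_)
  ext v
  simp only [ContinuousLinearMap.coe_comp', Function.comp_apply,
    ContinuousLinearMap.smul_apply, ContinuousLinearMap.coe_smul', Pi.smul_apply,
    ContinuousLinearMap.smulRight_apply, ContinuousLinearMap.one_apply,
    Complex.ofRealCLM_apply, smul_eq_mul, Complex.real_smul,
    ContinuousLinearMap.toSpanSingleton_apply]
  push_cast
  ring

lemma pd_comp_norm {h : ℝ → ℂ} {c : ℂ} {y : E3} (hy : y ≠ 0)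
    (hh : HasDerivAt h c ‖y‖) (m : Fin 3) :
    pd m (fun z => h ‖z‖) y = c * (‖y‖⁻¹ : ℝ) * ((y m : ℝ) : ℂ) := by
  unfold pd
  rw [(comp_norm_hasFDerivAt hy hh).fderiv]
  simp [real_inner_comm, mul_assoc, EuclideanSpace.inner_single_right]

noncomputable def gg (ξ : ℂ) (r : ℝ) : ℂ :=
  Complex.exp (Complex.I * ξ * (r : ℂ)) / (4 * (Real.pi : ℂ) * (r : ℂ))

noncomputable def kk (ξ : ℂ) (r : ℝ) : ℂ :=
  Complex.exp (Complex.I * ξ * (r : ℂ)) * (Complex.I * ξ * (r : ℂ) - 1) /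
    (4 * (Real.pi : ℂ) * (r : ℂ) ^ 3)

noncomputable def dkk (ξ : ℂ) (r : ℝ) : ℂ :=
  Complex.exp (Complex.I * ξ * (r : ℂ)) *
    (-(ξ ^ 2) * (r : ℂ) ^ 2 - 3 * Complex.I * ξ * (r : ℂ) + 3) /
    (4 * (Real.pi : ℂ) * (r : ℂ) ^ 4)

lemma hasDerivAt_coe (r : ℝ) : HasDerivAt (fun s : ℝ => (s : ℂ)) 1 r := by
  exact (Complex.ofRealCLM.hasDerivAt (x := r)).congr_deriv (by simp)

lemma hasDerivAt_gg (ξ : ℂ) {r : ℝ} (hr : r ≠ 0) :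
    HasDerivAt (gg ξ) (kk ξ r * r) r := by
  have hπ : (Real.pi : ℂ) ≠ 0 := by exact_mod_cast Real.pi_ne_zero
  have hrc : (r : ℂ) ≠ 0 := by exact_mod_cast hr
  have hN : HasDerivAt (fun s : ℝ => Complex.exp (Complex.I * ξ * (s : ℂ)))
      (Complex.exp (Complex.I * ξ * (r : ℂ)) * (Complex.I * ξ * 1)) r :=
    (((hasDerivAt_coe r).const_mul (Complex.I * ξ))).cexp
  have hD : HasDerivAt (fun s : ℝ => 4 * (Real.pi : ℂ) * (s : ℂ))
      (4 * (Real.pi : ℂ) * 1) r := (hasDerivAt_coe r).const_mul _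
  have hD0 : 4 * (Real.pi : ℂ) * (r : ℂ) ≠ 0 := by
    simp [hπ, hrc]
  have := hN.div hD hD0
  refine this.congr_deriv (Eq.symm ?_)
  unfold kk
  field_simp

lemma hasDerivAt_kk (ξ : ℂ) {r : ℝ} (hr : r ≠ 0) :
    HasDerivAt (kk ξ) (dkk ξ r) r := by
  have hπ : (Real.pi : ℂ) ≠ 0 := by exact_mod_cast Real.pi_ne_zero
  have hrc : (r : ℂ) ≠ 0 := by exact_mod_cast hr
  have hE : HasDerivAt (fun s : ℝ => Complex.exp (Complex.I * ξ * (s : ℂ)))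
      (Complex.exp (Complex.I * ξ * (r : ℂ)) * (Complex.I * ξ * 1)) r :=
    (((hasDerivAt_coe r).const_mul (Complex.I * ξ))).cexp
  have hL : HasDerivAt (fun s : ℝ => Complex.I * ξ * (s : ℂ) - 1)
      (Complex.I * ξ * 1) r := ((hasDerivAt_coe r).const_mul (Complex.I * ξ)).sub_const 1
  have hN := hE.mul hL
  have hD := ((hasDerivAt_pow 3 ((r : ℂ))).const_mul (4 * (Real.pi : ℂ))).comp_ofReal
  have hD0 : 4 * (Real.pi : ℂ) * (r : ℂ) ^ 3 ≠ 0 := by simp [hπ, hrc]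
  have := hN.div hD hD0
  refine this.congr_deriv (Eq.symm ?_)
  unfold dkk
  simp only [Pi.mul_apply]
  have hI : Complex.I * Complex.I = -1 := Complex.I_mul_I
  field_simp
  ring_nf
  rw [Complex.I_sq]
  ring

lemma Phi_eq (ξ : ℂ) : Phi ξ = fun z : E3 => gg ξ ‖z‖ := rfl

lemma pd_Phi (ξ : ℂ) {y : E3} (hy : y ≠ 0) (m : Fin 3) :
    pd m (Phi ξ) y = kk ξ ‖y‖ * ((y m : ℝ) : ℂ) := by
  have h0 : ‖y‖ ≠ 0 := norm_ne_zero_iff.mpr hy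
  rw [Phi_eq, pd_comp_norm hy (hasDerivAt_gg ξ h0) m]
  have hc : ((‖y‖ : ℝ) : ℂ) ≠ 0 := by exact_mod_cast h0
  push_cast
  field_simp

lemma pd2_Phi (ξ : ℂ) {x : E3} (hx : x ≠ 0) (j l : Fin 3) :
    pd j (pd l (Phi ξ)) x =
      dkk ξ ‖x‖ * (‖x‖⁻¹ : ℝ) * ((x j : ℝ) : ℂ) * ((x l : ℝ) : ℂ) +
        kk ξ ‖x‖ * (if j = l then 1 else 0) := by
  have h0 : ‖x‖ ≠ 0 := norm_ne_zero_iff.mpr hx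
  -- A: z ↦ kk ξ ‖z‖ ; B : z ↦ (z l : ℂ)
  have hA := comp_norm_hasFDerivAt hx (hasDerivAt_kk ξ h0)
  have hB : HasFDerivAt (fun z : E3 => ((z l : ℝ) : ℂ))
      (Complex.ofRealCLM.comp (EuclideanSpace.proj l)) x :=
    (Complex.ofRealCLM.comp (EuclideanSpace.proj l)).hasFDerivAt
  have hF : HasFDerivAt (fun z : E3 => kk ξ ‖z‖ * ((z l : ℝ) : ℂ)) _ x := hA.mul hB
  have hev : pd l (Phi ξ) =ᶠ[nhds x] fun z : E3 => kk ξ ‖z‖ * ((z l : ℝ) : ℂ) := by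
    have hmem : {z : E3 | z ≠ 0} ∈ nhds x :=
      IsOpen.mem_nhds (isOpen_compl_singleton) hx
    filter_upwards [hmem] with z hz
    exact pd_Phi ξ hz l
  show (fderiv ℝ (pd l (Phi ξ)) x) (EuclideanSpace.single j 1) =
    dkk ξ ‖x‖ * (‖x‖⁻¹ : ℝ) * ((x j : ℝ) : ℂ) * ((x l : ℝ) : ℂ) +
      kk ξ ‖x‖ * (if j = l then 1 else 0)
  rw [hev.fderiv_eq, hF.fderiv]
  simp only [ContinuousLinearMap.add_apply, ContinuousLinearMap.smul_apply,
    ContinuousLinearMap.coe_comp', Function.comp_apply, Complex.ofRealCLM_apply,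
    PiLp.proj_apply, EuclideanSpace.single_apply, smul_eq_mul,
    ContinuousLinearMap.coe_smul', Pi.smul_apply, innerSL_apply_apply]
  have hin : (inner ℝ x (EuclideanSpace.single j 1) : ℝ) = x j := by
    simp [EuclideanSpace.inner_single_right]
  rw [hin]
  rcases eq_or_ne j l with h | h
  · subst h; simp; ring
  · simp [h, Ne.symm h]; ring

lemma abs_coord_le (x : E3) (m : Fin 3) : |x m| ≤ ‖x‖ := by
  rw [EuclideanSpace.norm_eq]
  have h1 : |x m| = Real.sqrt (‖x m‖ ^ 2) := by
    rw [Real.sqrt_sq_eq_abs]; simp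
  rw [h1]
  apply Real.sqrt_le_sqrt
  exact Finset.single_le_sum (f := fun i => ‖x i‖ ^ 2) (fun i _ => by positivity)
    (Finset.mem_univ m)

/-- Componentwise estimate for the Maxwell fundamental solution:
`|G_{jℓ}(x)| ≤ (1/(4π))(2/‖x‖ + 4/(|ξ|‖x‖²) + 4/(|ξ|²‖x‖³))` for `x ≠ 0`,
when `Re ξ > 0` and `Im ξ > 0`. -/
theorem stmt_6 (ξ : ℂ) (hre : 0 < ξ.re) (him : 0 < ξ.im)
    (x : EuclideanSpace ℝ (Fin 3)) (hx : x ≠ 0) (j l : Fin 3) :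
    ‖G ξ j l x‖ ≤
      (1 / (4 * Real.pi)) *
        (2 / ‖x‖ + 4 / (‖ξ‖ * ‖x‖ ^ 2) + 4 / (‖ξ‖ ^ 2 * ‖x‖ ^ 3)) := by
  set r := ‖x‖ with hrdef
  set a := ‖ξ‖ with hadef
  have hr : 0 < r := norm_pos_iff.mpr hx
  have hξ0 : ξ ≠ 0 := fun h => by simp [h] at hre
  have ha : 0 < a := norm_pos_iff.mpr hξ0
  have hπ : 0 < Real.pi := Real.pi_pos
  have hexp : ‖(Complex.exp (Complex.I * ξ * (r : ℂ)))‖ ≤ 1 := by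
    rw [Complex.norm_exp]
    have : (Complex.I * ξ * (r : ℂ)).re = -(ξ.im * r) := by
      simp [Complex.mul_re, Complex.mul_im]
    rw [this, Real.exp_le_one_iff]
    have := mul_nonneg him.le hr.le
    linarith
  -- value of G
  have hG : G ξ j l x = -(gg ξ r) * (if j = l then 1 else 0) +
      (1 / ξ ^ 2) * (dkk ξ r * ((r⁻¹ : ℝ) : ℂ) * ((x j : ℝ) : ℂ) * ((x l : ℝ) : ℂ) +
        kk ξ r * (if j = l then 1 else 0)) := by
    rw [G, pd2_Phi ξ hx j l]; rfl
  have hδ : ‖if j = l then (1:ℂ) else 0‖ ≤ 1 := by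
    split <;> simp
  -- bounds on scalar pieces
  have hgg : ‖gg ξ r‖ ≤ 1 / (4 * Real.pi * r) := by
    rw [gg, norm_div]
    simp only [norm_mul, Complex.norm_real, Real.norm_eq_abs, abs_of_pos hr, abs_of_pos hπ, Complex.norm_ofNat]
    gcongr
  have hnum1 : ‖(Complex.I * ξ * (r : ℂ) - 1)‖ ≤ a * r + 1 := by
    have h1 := norm_sub_le (Complex.I * ξ * (r : ℂ)) 1
    have e1 : ‖(Complex.I * ξ * (r : ℂ))‖ = a * r := by
      simp [norm_mul, Complex.norm_real, Real.norm_eq_abs, abs_of_pos hr, hadef]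
    have e2 : ‖(1 : ℂ)‖ = 1 := by norm_num
    linarith
  have hkk : ‖kk ξ r‖ ≤ (a * r + 1) / (4 * Real.pi * r ^ 3) := by
    rw [kk, norm_div, norm_mul]
    simp only [norm_mul, norm_pow, Complex.norm_real, Real.norm_eq_abs, abs_of_pos hr, abs_of_pos hπ,
      Complex.norm_ofNat]
    calc ‖(Complex.exp (Complex.I * ξ * (r : ℂ)))‖ *
          ‖(Complex.I * ξ * (r : ℂ) - 1)‖ / (4 * Real.pi * r ^ 3)
        ≤ 1 * (a * r + 1) / (4 * Real.pi * r ^ 3) := by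
          gcongr
      _ = (a * r + 1) / (4 * Real.pi * r ^ 3) := by rw [one_mul]
  have hnum2 : ‖(-(ξ ^ 2) * (r : ℂ) ^ 2 - 3 * Complex.I * ξ * (r : ℂ) + 3)‖
      ≤ a ^ 2 * r ^ 2 + 3 * a * r + 3 := by
    have h1 := norm_add_le (-(ξ ^ 2) * (r : ℂ) ^ 2 - 3 * Complex.I * ξ * (r : ℂ)) 3
    have h2 := norm_sub_le (-(ξ ^ 2) * (r : ℂ) ^ 2) (3 * Complex.I * ξ * (r : ℂ))
    have e1 : ‖(-(ξ ^ 2) * (r : ℂ) ^ 2)‖ = a ^ 2 * r ^ 2 := by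
      simp [norm_mul, norm_pow, Complex.norm_real, Real.norm_eq_abs, abs_of_pos hr, hadef]
    have e2 : ‖(3 * Complex.I * ξ * (r : ℂ))‖ = 3 * a * r := by
      simp [norm_mul, Complex.norm_real, Real.norm_eq_abs, abs_of_pos hr, hadef]
    have e3 : ‖(3 : ℂ)‖ = 3 := by norm_num
    linarith
  have hdkk : ‖dkk ξ r‖ ≤ (a ^ 2 * r ^ 2 + 3 * a * r + 3) /
      (4 * Real.pi * r ^ 4) := by
    rw [dkk, norm_div, norm_mul]
    simp only [norm_mul, norm_pow, Complex.norm_real, Real.norm_eq_abs, abs_of_pos hr, abs_of_pos hπ,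
      Complex.norm_ofNat]
    calc ‖(Complex.exp (Complex.I * ξ * (r : ℂ)))‖ *
          ‖(-(ξ ^ 2) * (r : ℂ) ^ 2 - 3 * Complex.I * ξ * (r : ℂ) + 3)‖ /
          (4 * Real.pi * r ^ 4)
        ≤ 1 * (a ^ 2 * r ^ 2 + 3 * a * r + 3) / (4 * Real.pi * r ^ 4) := by
          gcongr
      _ = (a ^ 2 * r ^ 2 + 3 * a * r + 3) / (4 * Real.pi * r ^ 4) := by rw [one_mul]
  have hxj := abs_coord_le x j
  have hxl := abs_coord_le x l
  rw [← hrdef] at hxj hxl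
  have hrinv : ‖((r⁻¹ : ℝ) : ℂ)‖ = r⁻¹ := by
    rw [Complex.norm_real, Real.norm_eq_abs, abs_of_pos (inv_pos.mpr hr)]
  have hr0 : r ≠ 0 := ne_of_gt hr
  have ha0 : a ≠ 0 := ne_of_gt ha
  have hπ0 : Real.pi ≠ 0 := ne_of_gt hπ
  have hinner : ‖(dkk ξ r * ((r⁻¹ : ℝ) : ℂ) * ((x j : ℝ) : ℂ) * ((x l : ℝ) : ℂ) +
        kk ξ r * (if j = l then 1 else 0))‖ ≤
      ‖dkk ξ r‖ * r⁻¹ * |x j| * |x l| +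
        ‖kk ξ r‖ * ‖(if j = l then (1 : ℂ) else 0)‖ := by
    refine (norm_add_le _ _).trans_eq ?_
    rw [norm_mul, norm_mul, norm_mul, norm_mul, hrinv, Complex.norm_real, Real.norm_eq_abs, Complex.norm_real, Real.norm_eq_abs]
  calc ‖G ξ j l x‖
      ≤ ‖-(gg ξ r) * (if j = l then 1 else 0)‖ +
          ‖(1 / ξ ^ 2) *
            (dkk ξ r * ((r⁻¹ : ℝ) : ℂ) * ((x j : ℝ) : ℂ) * ((x l : ℝ) : ℂ) +
              kk ξ r * (if j = l then 1 else 0))‖ := by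
        rw [hG]; exact norm_add_le _ _
    _ = ‖gg ξ r‖ * ‖(if j = l then (1 : ℂ) else 0)‖ +
        (1 / a ^ 2) * ‖(dkk ξ r * ((r⁻¹ : ℝ) : ℂ) * ((x j : ℝ) : ℂ) * ((x l : ℝ) : ℂ) +
            kk ξ r * (if j = l then 1 else 0))‖ := by
        rw [norm_mul, norm_mul, norm_neg, norm_div, norm_pow, norm_one]
    _ ≤ 1 / (4 * Real.pi * r) * 1 +
        (1 / a ^ 2) * ((a ^ 2 * r ^ 2 + 3 * a * r + 3) / (4 * Real.pi * r ^ 4) * r⁻¹ * r * r +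
          (a * r + 1) / (4 * Real.pi * r ^ 3) * 1) := by
        gcongr ?_ * ?_ + ?_ * ?_
        · refine hinner.trans ?_
          gcongr
      _ = (1 / (4 * Real.pi)) * (2 / r + 4 / (a * r ^ 2) + 4 / (a ^ 2 * r ^ 3)) := by
        field_simp
        ring
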